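/- Let E be a complex Hilbert space and a ∈ E with ‖a‖ < 1. Define s_a = sqrt(1 - ‖a‖²), the orthogonal projection P_a(y) = (⟨y,a⟩/⟨a,a⟩)·a onto the span of a (when a ≠ 0), Q_a = Id - P_a, m_a(y) = (a - y)/(1 - ⟨y,a⟩), and φ_a(y) = (s_a Q_a + P_a)(m_a(y)) for y in the open unit ball. Then φ_a is an involution: φ_a(φ_a(y)) = y for all y in the open unit ball of E. -/

import Mathlib

/-- Orthogonal projection onto the span of `a` (interpreted as `0` when `a = 0`):
`P_a(y) = (⟨y,a⟩/⟨a,a⟩)·a`, the inner product being linear in its first variable. -/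
noncomputable def projA {E : Type*} [NormedAddCommGroup E] [InnerProductSpace ℂ E]
    (a y : E) : E :=
  ((inner ℂ a y : ℂ) / (inner ℂ a a : ℂ)) • a

/-- The Möbius automorphism `φ_a = (s_a Q_a + P_a) ∘ m_a` of the open unit ball, where
`s_a = sqrt(1-‖a‖²)`, `Q_a = Id - P_a` and `m_a(y) = (a-y)/(1-⟨y,a⟩)`. -/
noncomputable def phiA {E : Type*} [NormedAddCommGroup E] [InnerProductSpace ℂ E]
    (a y : E) : E :=
  ((Real.sqrt (1 - ‖a‖^2) : ℂ)) •
      (((1 - (inner ℂ a y : ℂ))⁻¹ • (a - y)) - projA a ((1 - (inner ℂ a y : ℂ))⁻¹ • (a - y))) +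
    projA a ((1 - (inner ℂ a y : ℂ))⁻¹ • (a - y))

set_option maxHeartbeats 1000000 in
theorem stmt8 {E : Type*} [NormedAddCommGroup E] [InnerProductSpace ℂ E]
    (a : E) (ha : ‖a‖ < 1) (y : E) (hy : ‖y‖ < 1) :
    phiA a (phiA a y) = y := by
  rcases eq_or_ne a 0 with rfl | h0
  · simp [phiA, projA]
  ·
    have hn0 : (inner ℂ a a : ℂ) ≠ 0 := inner_self_ne_zero.2 h0
    have hpos : (0:ℝ) < 1 - ‖a‖^2 := by nlinarith [norm_nonneg a]
    have hna : (inner ℂ a a : ℂ) = ((‖a‖^2 : ℝ) : ℂ) := by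
      rw [inner_self_eq_norm_sq_to_K]; norm_cast
    have habs : ‖(inner ℂ a y : ℂ)‖ < 1 := by
      calc ‖(inner ℂ a y : ℂ)‖ ≤ ‖a‖ * ‖y‖ := by
            simpa using norm_inner_le_norm (𝕜 := ℂ) a y
      _ < 1 := by nlinarith [norm_nonneg a, norm_nonneg y]
    have hd : (1 - (inner ℂ a y : ℂ)) ≠ 0 := by
      intro h
      have : (inner ℂ a y : ℂ) = 1 := by linear_combination -h
      simp [this] at habs
    have h1n : (1 - (inner ℂ a a : ℂ)) ≠ 0 := by
      rw [hna]
      have : ((1 - ‖a‖^2 : ℝ) : ℂ) ≠ 0 := by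
        exact_mod_cast ne_of_gt hpos
      intro h; apply this; push_cast at h ⊢; linear_combination h
    have ht : ((Real.sqrt (1 - ‖a‖^2) : ℝ) : ℂ)^2 = 1 - inner ℂ a a := by
      rw [hna]
      have h2 : ((Real.sqrt (1 - ‖a‖^2))^2 : ℝ) = 1 - ‖a‖^2 := Real.sq_sqrt hpos.le
      rw [← Complex.ofReal_pow, h2]
      push_cast
      ring
    set z := phiA a y with hzdef
    have hz : (inner ℂ a z : ℂ) = (inner ℂ a a - inner ℂ a y) / (1 - inner ℂ a y) := by
      rw [hzdef]
      simp only [phiA, projA, inner_add_right, inner_sub_right, inner_smul_right]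
      field_simp
      ring
    have hinv : (1 - (inner ℂ a z : ℂ))⁻¹ = (1 - inner ℂ a y) / (1 - inner ℂ a a) := by
      rw [hz]
      rw [show 1 - ((inner ℂ a a : ℂ) - inner ℂ a y) / (1 - inner ℂ a y)
          = (1 - inner ℂ a a) / (1 - inner ℂ a y) by field_simp; ring]
      exact inv_div _ _
    show phiA a z = y
    rw [phiA]
    simp only [projA, inner_smul_right, inner_sub_right, hz, hinv]
    rw [hzdef]
    simp only [phiA, projA, inner_add_right, inner_sub_right, inner_smul_right]
    match_scalars
    · field_simp
      ring_nf
      rw [ht]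
      ring
    · field_simp
      ring_nf
      rw [ht]
      ring
      field_simp
      ring
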